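/- Let n ≥ 1, let x p : Fin n → ℝ with the x_i pairwise distinct, let L be the Calogero–Moser Lax matrix of (x,p), and let e ∈ ℝ^n be the all-ones vector. Then for every λ ∈ ℝ, eᵀ · adjugate(λ·Id − L) · e = trace(adjugate(λ·Id − L)); equivalently, the sum of all the entries of adjugate(λ·Id − L) equals its trace. -/

import Mathlib

open Matrix

/-- The Calogero–Moser Lax matrix: `L i i = p i`, `L i j = 1/(x i - x j)` for `i ≠ j`. -/
noncomputable def laxMatrix {n : ℕ} (x p : Fin n → ℝ) : Matrix (Fin n) (Fin n) ℝ :=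
  Matrix.of fun i j => if i = j then p i else 1 / (x i - x j)

/-- For the Calogero–Moser Lax matrix `L`, the sum of all the entries of
`adjugate(λ·Id − L)` (i.e. `eᵀ · adjugate(λ·Id − L) · e` for the all-ones vector `e`)
equals its trace. -/
theorem sum_entries_adjugate_eq_trace {n : ℕ} (hn : 1 ≤ n) (x p : Fin n → ℝ)
    (hx : Function.Injective x) (lam : ℝ) :
    (fun _ => (1 : ℝ)) ⬝ᵥ
        ((lam • (1 : Matrix (Fin n) (Fin n) ℝ) - laxMatrix x p).adjugate.mulVec
          (fun _ => (1 : ℝ)))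
      = (lam • (1 : Matrix (Fin n) (Fin n) ℝ) - laxMatrix x p).adjugate.trace := by
  set M : Matrix (Fin n) (Fin n) ℝ := lam • (1 : Matrix (Fin n) (Fin n) ℝ) - laxMatrix x p
    with hM
  set X : Matrix (Fin n) (Fin n) ℝ := Matrix.diagonal x with hX
  set E : Matrix (Fin n) (Fin n) ℝ := Matrix.of fun _ _ => (1 : ℝ) with hEdef
  -- the commutator identity
  have hE : E = (1 : Matrix (Fin n) (Fin n) ℝ) - (X * M - M * X) := by
    ext i j
    by_cases h : i = j
    · subst h
      simp [hEdef, hX, hM, Matrix.mul_apply, Matrix.diagonal, mul_comm]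
    · have hxij : x i - x j ≠ 0 := sub_ne_zero.mpr fun hc => h (hx hc)
      simp only [hEdef, hX, hM, Matrix.sub_apply, Matrix.diagonal_mul, Matrix.mul_diagonal,
        Matrix.of_apply, Matrix.one_apply, h, if_neg h, Matrix.smul_apply, laxMatrix,
        smul_eq_mul, mul_zero, zero_sub, ↓reduceIte]
      field_simp
      ring
  -- pass from the bilinear form to a trace
  have hLHS : (fun _ => (1 : ℝ)) ⬝ᵥ (M.adjugate.mulVec fun _ => (1 : ℝ))
      = (M.adjugate * E).trace := by
    simp [dotProduct, mulVec, trace, diag, Matrix.mul_apply, hEdef]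
  rw [hLHS, hE, Matrix.mul_sub, Matrix.mul_one, Matrix.mul_sub, trace_sub, trace_sub]
  have h1 : (M.adjugate * (X * M)).trace = M.det * X.trace := by
    rw [Matrix.trace_mul_comm, Matrix.mul_assoc, Matrix.mul_adjugate, Matrix.mul_smul,
      Matrix.mul_one, trace_smul, smul_eq_mul]
  have h2 : (M.adjugate * (M * X)).trace = M.det * X.trace := by
    rw [← Matrix.mul_assoc, Matrix.adjugate_mul, Matrix.smul_mul, one_mul, trace_smul,
      smul_eq_mul]
  rw [h1, h2]
  ring
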